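/- Let N > 1, κ ∈ {−1, 0, 1}, K = κ(N−1), λ ∈ (0,1], and L > 0, with L < π in the case κ = 1. Then for every ε > 0 there exists δ₀ > 0, depending only on N, λ, L, ε, such that for every D ∈ [λL, L] and every x ∈ (0, δ₀) one has |f_{K,N,D}(x)·k_D / x^{N−1} − 1| ≤ ε; i.e. f_{K,N,D}(x) = (x^{N−1}/k_D)(1 + o(1)) as x → 0⁺, uniformly in D ∈ [λL, L]. -/

import Mathlib

set_option maxHeartbeats 1200000


open MeasureTheory Filter Set

/-- The function `s_κ`. -/
noncomputable def sK (κ θ : ℝ) : ℝ :=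
  if 0 < κ then Real.sin (Real.sqrt κ * θ) / Real.sqrt κ
  else if κ = 0 then θ
  else Real.sinh (Real.sqrt (-κ) * θ) / Real.sqrt (-κ)

/-- `k_D = ∫₀^D s_κ(t)^(N-1) dt`. -/
noncomputable def kD (κ N D : ℝ) : ℝ := ∫ t in (0:ℝ)..D, sK κ t ^ (N - 1)

/-- The function `f_{K,N,D}` (with `K = κ(N-1)`). -/
noncomputable def fKND (κ N D x : ℝ) : ℝ :=
  ((∫ y in (0:ℝ)..x, (sK κ (D - y) / sK κ (D - x)) ^ (N - 1)) +
    ∫ y in x..D, (sK κ y / sK κ x) ^ (N - 1))⁻¹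

/-- The model density `h^a_{K,N,D}` (with `K = κ(N-1)`). -/
noncomputable def hKND (κ N D a x : ℝ) : ℝ :=
  if x ≤ a then fKND κ N D a * (sK κ (D - x) / sK κ (D - a)) ^ (N - 1)
  else fKND κ N D a * (sK κ x / sK κ a) ^ (N - 1)

/-- The volume map `v_{K,N,D}(a) = ∫₀^a h^a_{K,N,D}`. -/
noncomputable def vKND (κ N D a : ℝ) : ℝ := ∫ x in (0:ℝ)..a, hKND κ N D a x

/-- `ω_N = π^(N/2)/Γ(N/2+1)`. -/
noncomputable def omegaN (N : ℝ) : ℝ := Real.pi ^ (N / 2) / Real.Gamma (N / 2 + 1)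

/-- `Vol_{K,N}(r) = N ω_N ∫₀^r s_κ(t)^(N-1) dt` (with `K = κ(N-1)`). -/
noncomputable def VolKN (κ N r : ℝ) : ℝ := N * omegaN N * ∫ t in (0:ℝ)..r, sK κ t ^ (N - 1)

/-- The coefficient `σ^{(s)}_{K,N-1}(θ)`, valued in `[0,∞]`. -/
noncomputable def sigmaE (K N s θ : ℝ) : ENNReal :=
  if (N - 1) * Real.pi ^ 2 ≤ K * θ ^ 2 then ⊤
  else ENNReal.ofReal (sK (K / (N - 1)) (s * θ) / sK (K / (N - 1)) θ)

/-- A nonnegative continuous function `h` on the interval `I` is an `MCP(K,N)` density. -/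
def IsMCPDensity (K N : ℝ) (I : Set ℝ) (h : ℝ → ℝ) : Prop :=
  ContinuousOn h I ∧ (∀ x ∈ I, 0 ≤ h x) ∧
    ∀ x₀ ∈ I, ∀ x₁ ∈ I, ∀ t ∈ Set.Icc (0:ℝ) 1,
      sigmaE K N (1 - t) |x₁ - x₀| ^ (N - 1) * ENNReal.ofReal (h x₀) ≤
        ENNReal.ofReal (h (t * x₁ + (1 - t) * x₀))

/-- The measure `h·𝓛¹` restricted to `[0,D]`. -/
noncomputable def mcMeasure (D : ℝ) (h : ℝ → ℝ) : Measure ℝ :=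
  (volume.restrict (Set.Icc 0 D)).withDensity fun x => ENNReal.ofReal (h x)

/-- The outer Minkowski content `μ⁺(E) = liminf_{ρ→0⁺} (μ(E^ρ) - μ(E))/ρ`. -/
noncomputable def minkContent (μ : Measure ℝ) (E : Set ℝ) : ℝ :=
  Filter.liminf (fun ρ : ℝ => ((μ (Metric.thickening ρ E)).toReal - (μ E).toReal) / ρ)
    (nhdsWithin 0 (Set.Ioi 0))


open intervalIntegral



lemma nonneg_of_deriv_Icc (f f' : ℝ → ℝ) (a b : ℝ)
    (hd : ∀ u, HasDerivAt f (f' u) u) (h0 : f a = 0)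
    (hf' : ∀ u ∈ Icc a b, 0 ≤ f' u) : ∀ x ∈ Icc a b, 0 ≤ f x := by
  intro x hx
  have hcont : Continuous f := by
    have : Differentiable ℝ f := fun u => (hd u).differentiableAt
    exact this.continuous
  have hmono : MonotoneOn f (Icc a b) := by
    apply monotoneOn_of_deriv_nonneg (convex_Icc a b) hcont.continuousOn
    · exact fun u _ => ((hd u).differentiableAt).differentiableWithinAt
    · intro u hu
      rw [(hd u).deriv]
      exact hf' u (interior_subset hu)
  have h2 := hmono ⟨le_refl a, hx.1.trans hx.2⟩ hx hx.1
  rw [h0] at h2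
  exact h2

lemma sinh_le_mul_cosh {u : ℝ} (hu : 0 ≤ u) : Real.sinh u ≤ u * Real.cosh u := by
  have h := nonneg_of_deriv_Icc (fun t => t * Real.cosh t - Real.sinh t)
    (fun t => t * Real.sinh t) 0 u
    (fun t => by
      have h := ((hasDerivAt_id t).fun_mul (Real.hasDerivAt_cosh t)).fun_sub (Real.hasDerivAt_sinh t)
      simp only [id] at h
      refine h.congr_deriv ?_
      ring)
    (by simp)
    (fun t ht => mul_nonneg ht.1 (Real.sinh_nonneg_iff.2 ht.1))
    u ⟨hu, le_refl u⟩
  linarith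

lemma cosh_le_aux {u : ℝ} (hu : u ∈ Icc (0:ℝ) 1) : Real.cosh u ≤ 1 + Real.cosh 1 * u ^ 2 := by
  have h := nonneg_of_deriv_Icc (fun t => 1 + Real.cosh 1 * t ^ 2 - Real.cosh t)
    (fun t => 2 * Real.cosh 1 * t - Real.sinh t) 0 1
    (fun t => by
      have h := ((hasDerivAt_const t (1:ℝ)).fun_add
        ((hasDerivAt_pow 2 t).const_mul (Real.cosh 1))).fun_sub (Real.hasDerivAt_cosh t)
      refine h.congr_deriv ?_
      push_cast
      ring)
    (by simp)
    (fun t ht => by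
      have h1 : Real.sinh t ≤ t * Real.cosh t := sinh_le_mul_cosh ht.1
      have h2 : Real.cosh t ≤ Real.cosh 1 := by
        rw [Real.cosh_le_cosh, abs_of_nonneg ht.1, abs_one]; exact ht.2
      nlinarith [Real.one_le_cosh (1:ℝ), ht.1])
    u hu
  linarith

lemma sinh_sub_le_cube {u : ℝ} (hu : u ∈ Icc (0:ℝ) 1) :
    Real.sinh u - u ≤ Real.cosh 1 * u ^ 3 := by
  have h := nonneg_of_deriv_Icc (fun t => Real.cosh 1 * t ^ 3 + t - Real.sinh t)
    (fun t => 3 * Real.cosh 1 * t ^ 2 + 1 - Real.cosh t) 0 1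
    (fun t => by
      have h := (((hasDerivAt_pow 3 t).const_mul (Real.cosh 1)).fun_add (hasDerivAt_id t)).fun_sub
        (Real.hasDerivAt_sinh t)
      simp only [id] at h
      refine h.congr_deriv ?_
      push_cast
      ring)
    (by simp)
    (fun t ht => by
      have h2 : Real.cosh t ≤ 1 + Real.cosh 1 * t ^ 2 := cosh_le_aux ht
      nlinarith [Real.one_le_cosh (1:ℝ), ht.1])
    u hu
  linarith


lemma key (s : ℝ → ℝ) (p lam L c C K3 : ℝ)
    (hp : 0 < p) (hL : 0 < L) (hlam : 0 < lam) (hlam1 : lam ≤ 1)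
    (hc : 0 < c) (hCpos : 0 < C) (hscont : Continuous s)
    (hs0 : ∀ t ∈ Icc (0:ℝ) L, c * t ≤ s t)
    (hs1 : ∀ t ∈ Icc (0:ℝ) L, s t ≤ C * t)
    (hK3 : 0 < K3)
    (hclose : ∀ t ∈ Icc (0:ℝ) (min 1 L), |s t - t| ≤ K3 * t ^ 3) :
    ∀ ε > 0, ∃ δ₀ > 0, ∀ D ∈ Icc (lam * L) L, ∀ x ∈ Ioo (0:ℝ) δ₀,
      |((∫ y in (0:ℝ)..x, (s (D - y) / s (D - x)) ^ p) +
         ∫ y in x..D, (s y / s x) ^ p)⁻¹ * (∫ t in (0:ℝ)..D, s t ^ p) / x ^ p - 1| ≤ ε := by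
  intro ε hε
  have hsp_cont : Continuous (fun t => s t ^ p) :=
    hscont.rpow_const (fun t => Or.inr hp.le)
  -- budget
  set ε₁ : ℝ := min (ε / 2) (1 / 2) with hε₁def
  have hε₁pos : 0 < ε₁ := lt_min (by linarith) (by norm_num)
  have hε₁half : ε₁ ≤ 1 / 2 := min_le_right _ _
  have hε₁ε : ε₁ ≤ ε / 2 := min_le_left _ _
  set η : ℝ := ε₁ / 3 with hηdef
  have hηpos : 0 < η := by positivity
  -- continuity of w ↦ w^p at 1
  obtain ⟨θ, hθpos, hθ⟩ : ∃ θ > 0, ∀ w : ℝ, |w - 1| < θ → |w ^ p - 1| < η := by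
    have h1 : ContinuousAt (fun w : ℝ => w ^ p) 1 :=
      Real.continuousAt_rpow_const 1 p (Or.inl one_ne_zero)
    rw [Metric.continuousAt_iff] at h1
    obtain ⟨θ, hθpos, hθ⟩ := h1 η hηpos
    exact ⟨θ, hθpos, fun w hw => by
      have := hθ (by rwa [Real.dist_eq])
      rwa [Real.dist_eq, Real.one_rpow] at this⟩
  -- constants
  set M : ℝ := 2 * C / (c * lam) with hMdef
  have hMpos : 0 < M := by positivity
  have hMp : 0 < M ^ p := Real.rpow_pos_of_pos hMpos p
  set m : ℝ := c ^ p * ((lam * L) ^ (p + 1) / (p + 1)) with hmdef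
  have hmpos : 0 < m := by
    have := Real.rpow_pos_of_pos hc p
    have := Real.rpow_pos_of_pos (show (0:ℝ) < lam * L by positivity) (p + 1)
    positivity
  -- lower bound on k_D
  have hkD_ge : ∀ D ∈ Icc (lam * L) L, m ≤ ∫ t in (0:ℝ)..D, s t ^ p := by
    intro D hD
    have hlamL : (0:ℝ) < lam * L := by positivity
    have step1 : (∫ t in (0:ℝ)..(lam * L), (c * t) ^ p) = m := by
      have hcongr : ∀ t ∈ uIcc (0:ℝ) (lam * L), (c * t) ^ p = c ^ p * t ^ p := by
        intro t ht
        rw [uIcc_of_le hlamL.le] at ht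
        exact Real.mul_rpow hc.le ht.1
      rw [integral_congr hcongr, intervalIntegral.integral_const_mul,
        integral_rpow (Or.inl (by linarith)), Real.zero_rpow (by linarith : (0:ℝ) < p + 1).ne', hmdef]
      ring
    have step2 : (∫ t in (0:ℝ)..(lam * L), (c * t) ^ p) ≤ ∫ t in (0:ℝ)..(lam * L), s t ^ p := by
      apply integral_mono_on hlamL.le
      · exact ((continuous_const.mul continuous_id).rpow_const
          (fun t => Or.inr hp.le)).intervalIntegrable _ _
      · exact hsp_cont.intervalIntegrable _ _
      · intro t ht
        have htL : t ∈ Icc (0:ℝ) L := ⟨ht.1, ht.2.trans (by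
          have := mul_le_mul_of_nonneg_right hlam1 hL.le; linarith)⟩
        exact Real.rpow_le_rpow (mul_nonneg hc.le htL.1) (hs0 t htL) hp.le
    have step3 : (∫ t in (0:ℝ)..(lam * L), s t ^ p) ≤ ∫ t in (0:ℝ)..D, s t ^ p := by
      apply integral_mono_interval (le_refl (0:ℝ)) hlamL.le hD.1
      · filter_upwards [MeasureTheory.ae_restrict_mem measurableSet_Ioc] with t ht
        have h9 : 0 ≤ s t := le_trans (mul_nonneg hc.le ht.1.le) (hs0 t ⟨ht.1.le, ht.2.trans hD.2⟩)
        exact Real.rpow_nonneg h9 p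
      · exact hsp_cont.intervalIntegrable _ _
    linarith
  -- choice of δ₀
  refine ⟨min (lam * L / 2) (min 1 (min (1 / C) (min (η * m) (min (η * m / M ^ p)
    (c * θ / (2 * K3)))))), by positivity, ?_⟩
  intro D hD x hx
  obtain ⟨hx0, hxδ⟩ := hx
  have hx1 : x < lam * L / 2 := lt_of_lt_of_le hxδ (min_le_left _ _)
  have hx2 : x < 1 := lt_of_lt_of_le hxδ ((min_le_right _ _).trans (min_le_left _ _))
  have hx3 : x < 1 / C := lt_of_lt_of_le hxδ
    ((min_le_right _ _).trans ((min_le_right _ _).trans (min_le_left _ _)))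
  have hx4 : x < η * m := lt_of_lt_of_le hxδ
    ((min_le_right _ _).trans ((min_le_right _ _).trans ((min_le_right _ _).trans (min_le_left _ _))))
  have hx5 : x < η * m / M ^ p := lt_of_lt_of_le hxδ
    ((min_le_right _ _).trans ((min_le_right _ _).trans ((min_le_right _ _).trans
      ((min_le_right _ _).trans (min_le_left _ _)))))
  have hx6 : x < c * θ / (2 * K3) := lt_of_lt_of_le hxδ
    ((min_le_right _ _).trans ((min_le_right _ _).trans ((min_le_right _ _).trans
      ((min_le_right _ _).trans (min_le_right _ _)))))
  obtain ⟨hD1, hD2⟩ := hD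
  have hlamL : (0:ℝ) < lam * L := by positivity
  have hxD : x < D := by linarith
  have hlamLle : lam * L ≤ L := by
    have := mul_le_mul_of_nonneg_right hlam1 hL.le
    linarith
  have hxL : x ≤ L := by linarith
  have hDx : lam * L / 2 ≤ D - x := by linarith
  have hDpos : 0 < D := lt_trans hx0 hxD
  -- positivity of s
  have hspos : ∀ t, 0 < t → t ≤ L → 0 < s t := fun t ht htL =>
    lt_of_lt_of_le (by positivity) (hs0 t ⟨ht.le, htL⟩)
  have hsnn : ∀ t, 0 ≤ t → t ≤ L → 0 ≤ s t := fun t ht htL =>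
    le_trans (by positivity) (hs0 t ⟨ht, htL⟩)
  have hsx : 0 < s x := hspos x hx0 hxL
  have hsxp : 0 < s x ^ p := Real.rpow_pos_of_pos hsx p
  have hxp : 0 < x ^ p := Real.rpow_pos_of_pos hx0 p
  set A := ∫ y in (0:ℝ)..x, (s (D - y) / s (D - x)) ^ p with hAdef
  set B := ∫ y in x..D, (s y / s x) ^ p with hBdef
  set kx := ∫ t in (0:ℝ)..x, s t ^ p with hkxdef
  set kT := ∫ t in (0:ℝ)..D, s t ^ p with hkTdef
  set J := ∫ t in x..D, s t ^ p with hJdef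
  have hkTm : m ≤ kT := hkD_ge D ⟨hD1, hD2⟩
  have hkTpos : 0 < kT := lt_of_lt_of_le hmpos hkTm
  -- fact: B = J / s x ^ p
  have hB : B = J / s x ^ p := by
    rw [hBdef, hJdef, ← intervalIntegral.integral_div]
    apply integral_congr
    intro y hy
    rw [uIcc_of_le hxD.le] at hy
    show (s y / s x) ^ p = s y ^ p / s x ^ p
    exact Real.div_rpow (hsnn y (hx0.le.trans hy.1) (hy.2.trans hD2)) (hsnn x hx0.le hxL) p
  -- fact: kT = kx + J
  have hsplit : kx + J = kT := by
    exact integral_add_adjacent_intervals (hsp_cont.intervalIntegrable _ _)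
      (hsp_cont.intervalIntegrable _ _)
  -- fact: 0 ≤ A ≤ x * M^p
  have hA0 : 0 ≤ A := by
    apply intervalIntegral.integral_nonneg hx0.le
    intro y hy
    have h1 : 0 ≤ s (D - y) := hsnn _ (by linarith [hy.2]) (by linarith [hy.1])
    have h2 : 0 ≤ s (D - x) := hsnn _ (by linarith) (by linarith)
    positivity
  have hAle : A ≤ x * M ^ p := by
    have : A ≤ ∫ _ in (0:ℝ)..x, M ^ p := by
      apply integral_mono_on hx0.le
      · apply Continuous.intervalIntegrable
        apply Continuous.rpow_const
        · exact (hscont.comp (continuous_const.sub continuous_id)).div_const _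
        · exact fun t => Or.inr hp.le
      · exact intervalIntegrable_const
      · intro y hy
        have hDy1 : 0 < D - y := by linarith [hy.2]
        have hDyL : D - y ≤ L := by linarith [hy.1]
        have h1 : s (D - y) ≤ C * L := (hs1 _ ⟨hDy1.le, hDyL⟩).trans (mul_le_mul_of_nonneg_left hDyL hCpos.le)
        have h2 : c * (lam * L / 2) ≤ s (D - x) := by
          have h3 := hs0 (D - x) ⟨by linarith, by linarith⟩
          have h4 := mul_le_mul_of_nonneg_left hDx hc.le
          linarith
        have hb : s (D - y) / s (D - x) ≤ M := by
          have hden : (0:ℝ) < c * (lam * L / 2) := by positivity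
          calc s (D - y) / s (D - x) ≤ C * L / (c * (lam * L / 2)) :=
                div_le_div₀ (by positivity) h1 hden h2
            _ = M := by rw [hMdef]; field_simp
        exact Real.rpow_le_rpow (div_nonneg (hsnn _ hDy1.le hDyL)
          (hsnn _ (by linarith) (by linarith))) hb hp.le
    simpa [mul_comm] using this
  -- fact: 0 ≤ kx ≤ x
  have hkx0 : 0 ≤ kx := by
    apply intervalIntegral.integral_nonneg hx0.le
    intro t ht
    have := hsnn t ht.1 (ht.2.trans hxL)
    positivity
  have hkxle : kx ≤ x := by
    have h1 : kx ≤ ∫ _ in (0:ℝ)..x, (C * x) ^ p := by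
      apply integral_mono_on hx0.le (hsp_cont.intervalIntegrable _ _) intervalIntegrable_const
      intro t ht
      have hst : s t ≤ C * x := (hs1 t ⟨ht.1, ht.2.trans hxL⟩).trans (mul_le_mul_of_nonneg_left ht.2 hCpos.le)
      exact Real.rpow_le_rpow (hsnn t ht.1 (ht.2.trans hxL)) hst hp.le
    have h2 : (C * x) ^ p ≤ 1 := by
      apply Real.rpow_le_one (by positivity) _ hp.le
      rw [div_eq_mul_inv] at hx3
      calc C * x ≤ C * (1 / C) := mul_le_mul_of_nonneg_left hx3.le hCpos.le
        _ = 1 := by field_simp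
    calc kx ≤ x * (C * x) ^ p := by simpa [mul_comm] using h1
      _ ≤ x * 1 := mul_le_mul_of_nonneg_left h2 hx0.le
      _ = x := mul_one x
  -- fact: u close to 1
  set u := x ^ p / s x ^ p with hudef
  have hu : |u - 1| < η := by
    have hnum : |x - s x| ≤ K3 * x ^ 3 := by
      have := hclose x ⟨hx0.le, le_min hx2.le hxL⟩
      rwa [abs_sub_comm] at this
    have hv : |x / s x - 1| < θ := by
      have heq : x / s x - 1 = (x - s x) / s x := by rw [sub_div, div_self hsx.ne']
      rw [heq, abs_div, abs_of_pos hsx]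
      have hle : |x - s x| / s x ≤ K3 * x ^ 3 / (c * x) :=
        div_le_div₀ (by positivity) hnum (by positivity) (hs0 x ⟨hx0.le, hxL⟩)
      have heq2 : K3 * x ^ 3 / (c * x) = (K3 / c) * x ^ 2 := by
        rw [div_eq_iff (by positivity : (c * x : ℝ) ≠ 0)]
        field_simp
      have hlt : (K3 / c) * x ^ 2 < θ := by
        have hx2' : x ^ 2 ≤ x := by
          have := mul_le_mul_of_nonneg_left hx2.le hx0.le
          calc x ^ 2 = x * x := sq x
            _ ≤ x * 1 := this
            _ = x := mul_one x
        have hKc : 0 < K3 / c := by positivity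
        have h5 : (K3 / c) * x < (K3 / c) * (c * θ / (2 * K3)) :=
          mul_lt_mul_of_pos_left hx6 hKc
        have h6 : (K3 / c) * (c * θ / (2 * K3)) = θ / 2 := by
          field_simp
        have h7 : (K3 / c) * x ^ 2 ≤ (K3 / c) * x :=
          mul_le_mul_of_nonneg_left hx2' hKc.le
        linarith
      calc |x - s x| / s x ≤ (K3 / c) * x ^ 2 := heq2 ▸ hle
        _ < θ := hlt
    have := hθ (x / s x) hv
    rwa [Real.div_rpow hx0.le hsx.le, ← hudef] at this
  have hu0 : 0 ≤ u := by positivity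
  -- numeric facts
  have hη6 : η ≤ 1 / 6 := by rw [hηdef]; linarith
  have h1m2η : 0 < 1 - 2 * η := by linarith
  obtain ⟨hulo', huup'⟩ := abs_lt.1 hu
  have hulo : 1 - η ≤ u := by linarith
  have huup : u ≤ 1 + η := by linarith
  -- J facts
  have hJ0 : 0 ≤ J := by
    apply intervalIntegral.integral_nonneg hxD.le
    intro t ht
    have := hsnn t (hx0.le.trans ht.1) (ht.2.trans hD2)
    positivity
  have hJle : J ≤ kT := by linarith
  have hkxη : kx ≤ η * kT := by
    have h1 : kx ≤ η * m := by linarith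
    have h2 : η * m ≤ η * kT := mul_le_mul_of_nonneg_left hkTm hηpos.le
    linarith
  have hJlo : (1 - η) * kT ≤ J := by
    have : (1 - η) * kT = kT - η * kT := by ring
    linarith
  -- A * x^p small
  have hAxp : A * x ^ p ≤ η * kT := by
    have hxple : x ^ p ≤ 1 := Real.rpow_le_one hx0.le hx2.le hp.le
    have h1 : A * x ^ p ≤ (x * M ^ p) * 1 :=
      mul_le_mul hAle hxple (Real.rpow_nonneg hx0.le p) (by positivity)
    have h2 : x * M ^ p ≤ η * m := by
      have h3 := mul_le_mul_of_nonneg_right hx5.le hMp.le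
      rwa [div_mul_cancel₀ _ hMp.ne'] at h3
    have h4 : η * m ≤ η * kT := mul_le_mul_of_nonneg_left hkTm hηpos.le
    linarith
  -- B * x^p = u * J
  have hBxp : B * x ^ p = u * J := by
    rw [hB, hudef, div_mul_eq_mul_div, div_mul_eq_mul_div, mul_comm J (x ^ p)]
  -- bounds on u * J
  have huJup : u * J ≤ (1 + η) * kT :=
    mul_le_mul huup hJle hJ0 (by linarith)
  have huJlo : (1 - 2 * η) * kT ≤ u * J := by
    have h1 : (1 - η) * ((1 - η) * kT) ≤ u * J :=
      mul_le_mul hulo hJlo (mul_nonneg (by linarith) hkTpos.le) (by linarith)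
    have h2 : (1 - η) * ((1 - η) * kT) - (1 - 2 * η) * kT = η ^ 2 * kT := by ring
    have h3 : 0 ≤ η ^ 2 * kT := mul_nonneg (sq_nonneg η) hkTpos.le
    linarith
  -- bounds on P
  set P := (A + B) * x ^ p with hPdef
  have hPsplit : P = A * x ^ p + u * J := by rw [hPdef, add_mul, hBxp]
  have hPup : P ≤ (1 + 2 * η) * kT := by
    have : (1 + 2 * η) * kT = η * kT + (1 + η) * kT := by ring
    linarith
  have hPlo : (1 - 2 * η) * kT ≤ P := by
    have hAxp0 : 0 ≤ A * x ^ p := mul_nonneg hA0 hxp.le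
    linarith
  have hPpos : 0 < P := lt_of_lt_of_le (mul_pos h1m2η hkTpos) hPlo
  -- rewrite goal
  have hABpos : 0 < A + B := by
    have h1 := mul_pos hPpos (inv_pos.2 hxp)
    rwa [hPdef, mul_assoc, mul_inv_cancel₀ hxp.ne', mul_one] at h1
  have hexpr : (A + B)⁻¹ * kT / x ^ p = kT / P := by
    rw [hPdef, inv_mul_eq_div, div_div]
  rw [hexpr, abs_le]
  have hup : kT / P ≤ 1 / (1 - 2 * η) := by
    have h1 : kT / P ≤ kT / ((1 - 2 * η) * kT) :=
      div_le_div_of_nonneg_left hkTpos.le (mul_pos h1m2η hkTpos) hPlo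
    have h2 : kT / ((1 - 2 * η) * kT) = 1 / (1 - 2 * η) := by
      rw [mul_comm, ← div_div, div_self hkTpos.ne']
    linarith
  have hup2 : 1 / (1 - 2 * η) ≤ 1 + 3 * η := by
    rw [div_le_iff₀ h1m2η]
    have h1 : 0 ≤ η * (1 - 6 * η) := mul_nonneg hηpos.le (by linarith)
    have h2 : (1 + 3 * η) * (1 - 2 * η) = 1 + η * (1 - 6 * η) := by ring
    linarith
  have hlo : 1 - 2 * η ≤ kT / P := by
    have h1 : kT / ((1 + 2 * η) * kT) ≤ kT / P :=
      div_le_div_of_nonneg_left hkTpos.le hPpos hPup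
    have h2 : kT / ((1 + 2 * η) * kT) = 1 / (1 + 2 * η) := by
      rw [mul_comm, ← div_div, div_self hkTpos.ne']
    have h3 : 1 - 2 * η ≤ 1 / (1 + 2 * η) := by
      rw [le_div_iff₀ (by linarith : (0:ℝ) < 1 + 2 * η)]
      have h4 : (1 - 2 * η) * (1 + 2 * η) = 1 - 4 * η ^ 2 := by ring
      have h5 : 0 ≤ η ^ 2 := sq_nonneg η
      linarith
    linarith
  have hεη : 3 * η = ε₁ := by rw [hηdef]; ring
  constructor
  · have : 2 * η ≤ ε := by linarith
    linarith
  · have h6 : kT / P - 1 ≤ 3 * η := by linarith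
    linarith

lemma sK_neg_one (θ : ℝ) : sK (-1) θ = Real.sinh θ := by
  rw [sK]
  norm_num

lemma sK_zero (θ : ℝ) : sK 0 θ = θ := by
  rw [sK]
  norm_num

lemma sK_one (θ : ℝ) : sK 1 θ = Real.sin θ := by
  rw [sK]
  norm_num


/-- `f_{K,N,D}(x) = (x^(N-1)/k_D)(1+o(1))` as `x → 0⁺`, uniformly in `D ∈ [λL, L]`. -/
theorem stmt0 (N κ lam L : ℝ) (hN : 1 < N) (hκ : κ = -1 ∨ κ = 0 ∨ κ = 1)
    (hlam : lam ∈ Set.Ioc (0:ℝ) 1) (hL : 0 < L) (hLpi : κ = 1 → L < Real.pi) :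
    ∀ ε > 0, ∃ δ₀ > 0, ∀ D ∈ Set.Icc (lam * L) L, ∀ x ∈ Set.Ioo (0:ℝ) δ₀,
      |fKND κ N D x * kD κ N D / x ^ (N - 1) - 1| ≤ ε := by
  intro ε hε
  have hp : 0 < N - 1 := by linarith
  obtain ⟨hlam0, hlam1⟩ := hlam
  rcases hκ with h | h | h
  · -- κ = -1, s = sinh
    subst h
    obtain ⟨δ₀, hδ₀, hmain⟩ := key Real.sinh (N - 1) lam L 1 (Real.cosh L) (Real.cosh 1)
      hp hL hlam0 hlam1 one_pos (Real.cosh_pos L) Real.continuous_sinh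
      (fun t ht => by rw [one_mul]; exact Real.self_le_sinh_iff.2 ht.1)
      (fun t ht => by
        have h1 : Real.sinh t ≤ t * Real.cosh t := sinh_le_mul_cosh ht.1
        have h2 : Real.cosh t ≤ Real.cosh L := by
          rw [Real.cosh_le_cosh, abs_of_nonneg ht.1, abs_of_nonneg hL.le]
          exact ht.2
        calc Real.sinh t ≤ t * Real.cosh t := h1
          _ ≤ t * Real.cosh L := mul_le_mul_of_nonneg_left h2 ht.1
          _ = Real.cosh L * t := mul_comm _ _)
      (Real.cosh_pos 1)
      (fun t ht => by
        have ht1 : t ∈ Set.Icc (0:ℝ) 1 := ⟨ht.1, ht.2.trans (min_le_left _ _)⟩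
        have h1 : t ≤ Real.sinh t := Real.self_le_sinh_iff.2 ht.1
        rw [abs_of_nonneg (by linarith)]
        exact sinh_sub_le_cube ht1)
      ε hε
    refine ⟨δ₀, hδ₀, ?_⟩
    intro D hD x hx
    have h2 := hmain D hD x hx
    simp only [fKND, kD, sK_neg_one]
    exact h2
  · -- κ = 0, s = id
    subst h
    obtain ⟨δ₀, hδ₀, hmain⟩ := key (fun θ => θ) (N - 1) lam L 1 1 1
      hp hL hlam0 hlam1 one_pos one_pos continuous_id
      (fun t _ => by rw [one_mul])
      (fun t _ => by rw [one_mul])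
      one_pos
      (fun t ht => by
        simp only [sub_self, abs_zero]
        exact mul_nonneg one_pos.le (pow_nonneg ht.1 3))
      ε hε
    refine ⟨δ₀, hδ₀, ?_⟩
    intro D hD x hx
    have h2 := hmain D hD x hx
    simp only [fKND, kD, sK_zero]
    simpa using h2
  · -- κ = 1, s = sin
    subst h
    have hπ : L < Real.pi := hLpi rfl
    have hsinL : 0 < Real.sin L := Real.sin_pos_of_pos_of_lt_pi hL hπ
    obtain ⟨δ₀, hδ₀, hmain⟩ := key Real.sin (N - 1) lam L (Real.sin L / L) 1 1
      hp hL hlam0 hlam1 (by positivity) one_pos Real.continuous_sin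
      (fun t ht => by
        rcases eq_or_lt_of_le ht.1 with h0 | h0
        · simp [← h0]
        have hcc := strictConcaveOn_sin_Icc.concaveOn
        have hmem0 : (0:ℝ) ∈ Set.Icc 0 Real.pi := ⟨le_rfl, Real.pi_pos.le⟩
        have hmemL : L ∈ Set.Icc 0 Real.pi := ⟨hL.le, hπ.le⟩
        have htL1 : t / L ≤ 1 := div_le_one_of_le₀ ht.2 hL.le
        have ha : (0:ℝ) ≤ 1 - t / L := by linarith
        have hb : (0:ℝ) ≤ t / L := by positivity
        have hab : (1 - t / L) + t / L = 1 := by ring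
        have h3 := hcc.2 hmem0 hmemL ha hb hab
        simp only [smul_eq_mul, mul_zero, Real.sin_zero, zero_add, add_zero] at h3
        rw [div_mul_cancel₀ _ hL.ne'] at h3
        have : Real.sin L / L * t = t / L * Real.sin L := by ring
        linarith
      )
      (fun t ht => by rw [one_mul]; exact Real.sin_le ht.1)
      one_pos
      (fun t ht => by
        have ht1 : t ≤ 1 := ht.2.trans (min_le_left _ _)
        have hsl : Real.sin t ≤ t := Real.sin_le ht.1
        rw [abs_of_nonpos (by linarith), one_mul]
        rcases eq_or_lt_of_le ht.1 with h0 | h0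
        · simp [← h0]
        have := Real.sin_gt_sub_cube h0
        have ht3 : 0 ≤ t ^ 3 := by positivity
        linarith)
      ε hε
    refine ⟨δ₀, hδ₀, ?_⟩
    intro D hD x hx
    have h2 := hmain D hD x hx
    simp only [fKND, kD, sK_one]
    exact h2
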